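/- There exist an integer n₀ ≥ 1 and a constant C > 0 (depending only on θ and the sequence (p_i)) such that the following holds: for all 0 ≤ t₁ ≤ t₂ ≤ 1 with δ = t₂ − t₁ and every integer n ≥ n₀, if (X_i)_{i≥1} and (Y_i)_{i≥1} are ℕ-valued random variables on a probability space, all 2∞ of them mutually independent, with X_i Poisson-distributed with parameter n t₁ p_i and Y_i Poisson-distributed with parameter n δ p_i, then the random variable D = Σ_{i≥1} ( n t₂ p_i · 1{X_i + Y_i = 0} − n t₁ p_i · 1{X_i = 0} ) (the series converges absolutely a.s. and D is square-integrable) satisfies Var(D) ≤ C · α(n) · δ^{θ/2}. -/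

import Mathlib

set_option maxHeartbeats 1000000

open Filter Topology Real MeasureTheory ProbabilityTheory


private lemma aux_sq_exp_le_one {x : ℝ} (hx : 0 ≤ x) : x ^ 2 * Real.exp (-x) ≤ 1 := by
  rw [Real.exp_neg]
  rw [mul_inv_le_iff₀ (Real.exp_pos x), one_mul]
  have h4 : (Real.exp (x / 4)) ^ (4 : ℕ) = Real.exp x := by
    rw [← Real.exp_nat_mul]; push_cast; ring_nf
  have h1 : x / 4 + 1 ≤ Real.exp (x / 4) := Real.add_one_le_exp _
  have h2 : x ≤ Real.exp (x / 4) ^ 2 := by nlinarith [sq_nonneg (x / 4 - 1)]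
  have h3 : x ^ 2 ≤ (Real.exp (x / 4) ^ 2) ^ 2 := by
    have := mul_self_le_mul_self hx h2
    nlinarith
  calc x ^ 2 ≤ (Real.exp (x / 4) ^ 2) ^ 2 := h3
    _ = Real.exp (x / 4) ^ (4 : ℕ) := by ring
    _ = Real.exp x := h4

private lemma aux_keyineq (θ q tt dd : ℝ) (hθ : 0 < θ) (hθ1 : θ ≤ 1) (hq : 0 ≤ q)
    (htt : 0 ≤ tt) (hdd : 0 ≤ dd) (hsum1 : tt + dd ≤ 1) :
    ((tt * q + dd * q) ^ 2 - 2 * (tt * q) * (tt * q + dd * q)) *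
        (Real.exp (-(tt * q)) * Real.exp (-(dd * q))) + (tt * q) ^ 2 * Real.exp (-(tt * q))
      ≤ 2 * dd ^ (θ / 2) * (if 1 ≤ q then q ^ (θ / 2) else q ^ 2) := by
  obtain ⟨a, ha⟩ : ∃ a, a = tt * q := ⟨_, rfl⟩
  obtain ⟨b, hb⟩ : ∃ b, b = dd * q := ⟨_, rfl⟩
  rw [← ha, ← hb]
  have ha0 : 0 ≤ a := ha ▸ mul_nonneg htt hq
  have hb0 : 0 ≤ b := hb ▸ mul_nonneg hdd hq
  have haq : a ≤ q := by rw [ha]; nlinarith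
  have hbq : b ≤ q := by rw [hb]; nlinarith
  have hea : Real.exp (-a) ≤ 1 := Real.exp_le_one_iff.2 (by linarith)
  have heb : Real.exp (-b) ≤ 1 := Real.exp_le_one_iff.2 (by linarith)
  have hea0 : 0 < Real.exp (-a) := Real.exp_pos _
  have heb0 : 0 < Real.exp (-b) := Real.exp_pos _
  obtain ⟨M, hM⟩ : ∃ M, M = min b 1 := ⟨_, rfl⟩
  obtain ⟨Q, hQ⟩ : ∃ Q, Q = min q 1 := ⟨_, rfl⟩
  have hM0 : 0 ≤ M := hM ▸ le_min hb0 one_pos.le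
  have hQ0 : 0 ≤ Q := hQ ▸ le_min hq one_pos.le
  have hMQ : M ≤ Q := hM ▸ hQ ▸ min_le_min hbq le_rfl
  have hQ1 : Q ≤ 1 := hQ ▸ min_le_right _ _
  -- LHS = b^2 e^{-a} e^{-b} + a^2 e^{-a} (1 - e^{-b})
  have hLHS : ((a + b) ^ 2 - 2 * a * (a + b)) * (Real.exp (-a) * Real.exp (-b))
        + a ^ 2 * Real.exp (-a)
      = b ^ 2 * Real.exp (-a) * Real.exp (-b)
        + a ^ 2 * Real.exp (-a) * (1 - Real.exp (-b)) := by ring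
  -- step 1 : b^2 e^{-a} e^{-b} ≤ M^2
  have hstep1 : b ^ 2 * Real.exp (-a) * Real.exp (-b) ≤ M ^ 2 := by
    rcases le_or_gt b 1 with h | h
    · have hMb : M = b := hM ▸ min_eq_left h
      rw [hMb]
      calc b ^ 2 * Real.exp (-a) * Real.exp (-b) ≤ b ^ 2 * 1 * 1 := by
            apply mul_le_mul (mul_le_mul le_rfl hea hea0.le (sq_nonneg _)) heb heb0.le
            positivity
        _ = b ^ 2 := by ring
    · have hMb : M = 1 := hM ▸ min_eq_right h.le
      rw [hMb]
      have := aux_sq_exp_le_one hb0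
      calc b ^ 2 * Real.exp (-a) * Real.exp (-b) ≤ b ^ 2 * 1 * Real.exp (-b) := by
            apply mul_le_mul_of_nonneg_right _ heb0.le
            exact mul_le_mul_of_nonneg_left hea (sq_nonneg _)
        _ = b ^ 2 * Real.exp (-b) := by ring
        _ ≤ 1 := this
        _ = 1 ^ 2 := by norm_num
  -- step 2 : a^2 e^{-a} ≤ Q^2
  have hstep2 : a ^ 2 * Real.exp (-a) ≤ Q ^ 2 := by
    rcases le_or_gt a 1 with h | h
    · have h1 : min a 1 = a := min_eq_left h
      have h2 : min a 1 ≤ Q := hQ ▸ min_le_min haq le_rfl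
      calc a ^ 2 * Real.exp (-a) ≤ a ^ 2 * 1 := mul_le_mul_of_nonneg_left hea (sq_nonneg _)
        _ = (min a 1) ^ 2 := by rw [h1]; ring
        _ ≤ Q ^ 2 := by
            apply pow_le_pow_left₀ (le_min ha0 one_pos.le) h2
    · have hq1 : (1:ℝ) ≤ q := le_trans h.le haq
      have hQq : Q = 1 := hQ ▸ min_eq_right hq1
      rw [hQq, one_pow]
      exact aux_sq_exp_le_one ha0
  have honeminus : 1 - Real.exp (-b) ≤ M := by
    rcases le_or_gt b 1 with h | h
    · rw [hM, min_eq_left h]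
      have := Real.add_one_le_exp (-b)
      linarith
    · rw [hM, min_eq_right h.le]; linarith
  -- combine to 2 Q M
  have hcomb : ((a + b) ^ 2 - 2 * a * (a + b)) * (Real.exp (-a) * Real.exp (-b))
        + a ^ 2 * Real.exp (-a) ≤ 2 * (Q * M) := by
    rw [hLHS]
    have h1 : b ^ 2 * Real.exp (-a) * Real.exp (-b) ≤ Q * M := by
      calc b ^ 2 * Real.exp (-a) * Real.exp (-b) ≤ M ^ 2 := hstep1
        _ = M * M := sq M
        _ ≤ Q * M := mul_le_mul_of_nonneg_right hMQ hM0
    have h2 : a ^ 2 * Real.exp (-a) * (1 - Real.exp (-b)) ≤ Q * M := by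
      have hml : 0 ≤ 1 - Real.exp (-b) := by linarith
      calc a ^ 2 * Real.exp (-a) * (1 - Real.exp (-b)) ≤ Q ^ 2 * M := by
            apply mul_le_mul hstep2 honeminus hml (sq_nonneg _)
        _ = Q * M * Q := by ring
        _ ≤ Q * M * 1 := by
            apply mul_le_mul_of_nonneg_left hQ1 (mul_nonneg hQ0 hM0)
        _ = Q * M := by ring
    linarith
  -- step 3 : Q * M ≤ dd^{θ/2} * (if ...)
  have hstep3 : Q * M ≤ dd ^ (θ / 2) * (if 1 ≤ q then q ^ (θ / 2) else q ^ 2) := by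
    have hθ2 : 0 < θ / 2 := by linarith
    have hθ2' : θ / 2 ≤ 1 / 2 := by linarith
    rcases le_or_gt 1 q with h | h
    · rw [if_pos h]
      rw [hQ, min_eq_right h, one_mul]
      rw [← Real.mul_rpow hdd hq]
      rcases eq_or_lt_of_le hb0 with h0 | h0
      · rw [hM, ← h0]
        simp only [min_def]
        rw [if_pos (by norm_num : (0:ℝ) ≤ 1)]
        positivity
      · rcases le_or_gt b 1 with hb1 | hb1
        · rw [hM, min_eq_left hb1, hb]
          calc dd * q = (dd * q) ^ (1:ℝ) := (Real.rpow_one _).symm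
            _ ≤ (dd * q) ^ (θ / 2) := by
                apply Real.rpow_le_rpow_of_exponent_ge (hb ▸ h0) (hb ▸ hb1)
                linarith
        · rw [hM, min_eq_right hb1.le]
          rw [hb] at hb1
          exact Real.one_le_rpow hb1.le (by linarith)
    · rw [if_neg (not_le.2 h)]
      rw [hQ, min_eq_left h.le]
      have hbl1 : b ≤ 1 := le_trans hbq h.le
      rw [hM, min_eq_left hbl1, hb]

      have hdd' : dd ≤ dd ^ (θ / 2) := by
        rcases eq_or_lt_of_le hdd with h0 | h0
        · rw [← h0]
          rw [Real.zero_rpow (by linarith)]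
        · have hdd1 : dd ≤ 1 := by linarith
          calc dd = dd ^ (1:ℝ) := (Real.rpow_one _).symm
            _ ≤ dd ^ (θ / 2) := Real.rpow_le_rpow_of_exponent_ge h0 hdd1 (by linarith)
      calc q * (dd * q) = dd * q ^ 2 := by ring
        _ ≤ dd ^ (θ / 2) * q ^ 2 := mul_le_mul_of_nonneg_right hdd' (sq_nonneg _)
  calc _ ≤ 2 * (Q * M) := hcomb
    _ ≤ 2 * (dd ^ (θ / 2) * (if 1 ≤ q then q ^ (θ / 2) else q ^ 2)) := by
        apply mul_le_mul_of_nonneg_left hstep3 (by norm_num)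
    _ = 2 * dd ^ (θ / 2) * (if 1 ≤ q then q ^ (θ / 2) else q ^ 2) := by ring


section
variable {S : Set ℕ}

private lemma aux_lower_ncard (hS : S.Finite)
    (hlow : ∀ i j : ℕ, i ≤ j → j ∈ S → i ∈ S) :
    ∀ i, i < S.ncard ↔ i ∈ S := by
  have hcne : Sᶜ.Nonempty := by
    rw [Set.nonempty_compl]
    intro h
    exact Set.infinite_univ (h ▸ hS)
  set m := sInf Sᶜ with hm
  have hmS : m ∈ Sᶜ := Nat.sInf_mem hcne
  have hSeq : S = Set.Iio m := by
    ext i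
    constructor
    · intro hi
      by_contra hlt
      simp only [Set.mem_Iio, not_lt] at hlt
      exact hmS (hlow m i hlt hi)
    · intro hi
      simp only [Set.mem_Iio] at hi
      by_contra hiS
      exact Nat.notMem_of_lt_sInf hi (by exact hiS)
  have hcard : S.ncard = m := by
    rw [hSeq, ← Finset.coe_range, Set.ncard_coe_finset, Finset.card_range]
  intro i
  rw [hcard, hSeq, Set.mem_Iio]

end

private lemma aux_summable {p : ℕ → ℝ} (hp_sum : ∑' i, p i = 1) :
    Summable p := by
  by_contra h
  rw [tsum_eq_zero_of_not_summable h] at hp_sum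
  norm_num at hp_sum

private lemma aux_finite {p : ℕ → ℝ} (hsum : Summable p) {x : ℝ} (hx : 0 < x) :
    {i : ℕ | p i ≥ 1 / x}.Finite := by
  have h0 : Tendsto p atTop (nhds 0) := hsum.tendsto_atTop_zero
  have hev : ∀ᶠ i in atTop, p i < 1 / x := by
    apply h0.eventually_lt_const
    positivity
  rw [← Nat.cofinite_eq_atTop, Filter.eventually_cofinite] at hev
  apply hev.subset
  intro i hi
  simp only [Set.mem_setOf_eq] at hi ⊢
  linarith

private lemma aux_core (p : ℕ → ℝ) (hp_pos : ∀ i, 0 < p i) (hp_mono : Antitone p)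
    (hp_sum : ∑' i, p i = 1) (θ : ℝ) (hθ0 : 0 < θ) (hθ1 : θ ≤ 1)
    (L : ℝ → ℝ) (hL : ∀ c > (0:ℝ), Tendsto (fun x => L (c*x) / L x) atTop (𝓝 1))
    (hα : ∀ x > (0:ℝ), ((Set.ncard {i : ℕ | p i ≥ 1 / x} : ℝ)) = x ^ θ * L x) :
    ∃ x₁ : ℝ, 1 ≤ x₁ ∧ ∃ C₀ > (0:ℝ), ∀ y : ℝ, x₁ ≤ y → ∀ N : ℕ,
      ∑ i ∈ Finset.range N,
          (if 1 ≤ y * p i then (y * p i) ^ (θ/2) else (y * p i) ^ 2)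
        ≤ C₀ * (Set.ncard {i : ℕ | p i ≥ 1 / y} : ℝ) := by
  classical
  have hsum : Summable p := aux_summable hp_sum
  set A : ℝ → ℕ := fun x => Set.ncard {i : ℕ | p i ≥ 1 / x} with hA
  have hAiff : ∀ x : ℝ, 0 < x → ∀ i, i < A x ↔ 1 / x ≤ p i := by
    intro x hx
    exact aux_lower_ncard (aux_finite hsum hx)
      (fun i j hij hj => le_trans hj (hp_mono hij))
  have hAnot : ∀ x : ℝ, 0 < x → ∀ i, A x ≤ i → p i < 1 / x := by
    intro x hx i hi
    by_contra h
    push_neg at h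
    exact absurd ((hAiff x hx i).2 h) (not_lt.2 hi)
  have hAmono : ∀ x y : ℝ, 0 < x → x ≤ y → A x ≤ A y := by
    intro x y hx hxy
    apply Set.ncard_le_ncard _ (aux_finite hsum (lt_of_lt_of_le hx hxy))
    intro i hi
    simp only [Set.mem_setOf_eq] at hi ⊢
    calc 1 / y ≤ 1 / x := by
          apply one_div_le_one_div_of_le hx hxy
      _ ≤ p i := hi
  have hp0le1 : p 0 ≤ 1 := by
    rw [← hp_sum]
    exact Summable.le_tsum hsum 0 (fun j _ => (hp_pos j).le)
  have hp0pos : 0 < p 0 := hp_pos 0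
  have hApos : ∀ x : ℝ, 1 / p 0 ≤ x → 1 ≤ A x := by
    intro x hx
    have hxpos : 0 < x := lt_of_lt_of_le (by positivity) hx
    have : 1 / x ≤ p 0 := by
      rw [div_le_iff₀ hxpos]
      rw [div_le_iff₀ hp0pos] at hx
      linarith
    exact (hAiff x hxpos 0).2 this
  -- constants
  set Klo : ℝ := (2:ℝ) ^ (3*θ/4) with hKlo
  set Khi : ℝ := (2:ℝ) ^ (5*θ/4) with hKhi
  set Kθ : ℝ := (2:ℝ) ^ (θ/2) with hKθ
  set ρ : ℝ := (2:ℝ) ^ (-(θ/4)) with hρ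
  have hKlo1 : 1 < Klo := Real.one_lt_rpow_iff_of_pos two_pos |>.2 (Or.inl ⟨one_lt_two, by linarith⟩)
  have hKlo2 : Klo ≤ 2 := by
    calc Klo ≤ (2:ℝ) ^ (1:ℝ) := Real.rpow_le_rpow_of_exponent_le one_le_two (by linarith)
      _ = 2 := Real.rpow_one 2
  have hKhi0 : 0 < Khi := Real.rpow_pos_of_pos two_pos _
  have hKhi3 : Khi ≤ 3 := by
    have h1 : Khi ≤ (2:ℝ) ^ (3/2 : ℝ) :=
      Real.rpow_le_rpow_of_exponent_le one_le_two (by linarith)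
    have h2 : (2:ℝ) ^ (3/2 : ℝ) = 2 * Real.sqrt 2 := by
      rw [show (3/2 : ℝ) = 1 + 1/2 by norm_num, Real.rpow_add two_pos, Real.rpow_one,
        ← Real.sqrt_eq_rpow]
    have h3 : Real.sqrt 2 ≤ 3/2 := by
      nlinarith [Real.sq_sqrt (by norm_num : (0:ℝ) ≤ 2), Real.sqrt_nonneg 2]
    calc Khi ≤ 2 * Real.sqrt 2 := by rw [← h2]; exact h1
      _ ≤ 2 * (3/2) := by linarith
      _ = 3 := by norm_num
  have hKθ0 : 0 < Kθ := Real.rpow_pos_of_pos two_pos _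
  have hKθ1 : 1 ≤ Kθ := Real.one_le_rpow one_le_two (by linarith)
  have hKθKlo : Kθ ≤ Klo := Real.rpow_le_rpow_of_exponent_le one_le_two (by linarith)
  have hρ0 : 0 < ρ := Real.rpow_pos_of_pos two_pos _
  have hρ1 : ρ < 1 := Real.rpow_lt_one_of_one_lt_of_neg one_lt_two (by linarith)
  have hKθeq : Kθ = Klo * ρ := by
    rw [hKθ, hKlo, hρ, ← Real.rpow_add two_pos]
    congr 1
    ring
  -- doubling
  obtain ⟨x₀, hx₀⟩ : ∃ x₀ : ℝ, ∀ x ≥ x₀,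
      (2:ℝ) ^ (-(θ/4)) ≤ L (2*x) / L x ∧ L (2*x) / L x ≤ (2:ℝ) ^ (θ/4) := by
    have h1 : ∀ᶠ x in atTop, (2:ℝ) ^ (-(θ/4)) < L (2*x) / L x :=
      (hL 2 two_pos).eventually_const_lt
        (Real.rpow_lt_one_of_one_lt_of_neg one_lt_two (by linarith))
    have h2 : ∀ᶠ x in atTop, L (2*x) / L x < (2:ℝ) ^ (θ/4) :=
      (hL 2 two_pos).eventually_lt_const
        (Real.one_lt_rpow_iff_of_pos two_pos |>.2 (Or.inl ⟨one_lt_two, by linarith⟩))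
    rcases (h1.and h2).exists_forall_of_atTop with ⟨x₀, hx₀⟩
    exact ⟨x₀, fun x hx => ⟨(hx₀ x hx).1.le, (hx₀ x hx).2.le⟩⟩
  set x₁ : ℝ := max (max 1 (1/p 0)) x₀ with hx₁def
  have hx₁1 : (1:ℝ) ≤ x₁ := le_trans (le_max_left _ _) (le_max_left _ _)
  have hx₁p : 1/p 0 ≤ x₁ := le_trans (le_max_right _ _) (le_max_left _ _)
  have hx₁x₀ : x₀ ≤ x₁ := le_max_right _ _
  have hdb : ∀ x : ℝ, x₁ ≤ x →
      Klo * (A x : ℝ) ≤ (A (2*x) : ℝ) ∧ (A (2*x) : ℝ) ≤ Khi * (A x : ℝ) := by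
    intro x hx
    have hxpos : 0 < x := lt_of_lt_of_le one_pos (le_trans hx₁1 hx)
    have h2xpos : 0 < 2*x := by linarith
    have hAx1 : (1:ℝ) ≤ (A x : ℝ) := by
      exact_mod_cast hApos x (le_trans hx₁p hx)
    have hαx := hα x hxpos
    have hα2x := hα (2*x) h2xpos
    have hxθpos : (0:ℝ) < x ^ θ := Real.rpow_pos_of_pos hxpos θ
    have hLx : 0 < L x := by
      have h : 0 < x ^ θ * L x := by rw [← hαx]; linarith
      nlinarith
    obtain ⟨hr1, hr2⟩ := hx₀ x (le_trans hx₁x₀ hx)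
    have hL2x_lo : (2:ℝ) ^ (-(θ/4)) * L x ≤ L (2*x) := by
      rw [← le_div_iff₀ hLx]
      exact hr1
    have hL2x_hi : L (2*x) ≤ (2:ℝ) ^ (θ/4) * L x := by
      rw [← div_le_iff₀ hLx]
      exact hr2
    have hmul : ((2:ℝ)*x) ^ θ = (2:ℝ)^θ * x^θ := Real.mul_rpow (by norm_num) hxpos.le
    constructor
    · rw [hαx, hα2x, hmul]
      have heq : Klo = (2:ℝ)^θ * (2:ℝ)^(-(θ/4)) := by
        rw [hKlo, ← Real.rpow_add two_pos]
        congr 1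
        ring
      calc Klo * (x^θ * L x) = (2:ℝ)^θ * x^θ * ((2:ℝ)^(-(θ/4)) * L x) := by
            rw [heq]; ring
        _ ≤ (2:ℝ)^θ * x^θ * L (2*x) := by
            apply mul_le_mul_of_nonneg_left hL2x_lo
            positivity
        _ = (2:ℝ)^θ * x^θ * L (2*x) := rfl
    · rw [hαx, hα2x, hmul]
      have heq : Khi = (2:ℝ)^θ * (2:ℝ)^(θ/4) := by
        rw [hKhi, ← Real.rpow_add two_pos]
        congr 1
        ring
      calc (2:ℝ)^θ * x^θ * L (2*x) ≤ (2:ℝ)^θ * x^θ * ((2:ℝ)^(θ/4) * L x) := by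
            apply mul_le_mul_of_nonneg_left hL2x_hi
            positivity
        _ = Khi * (x^θ * L x) := by rw [heq]; ring
  -- iterated doubling
  have h2mx : ∀ (m : ℕ) (x : ℝ), 0 < x → x₁ ≤ x → x₁ ≤ (2:ℝ)^m * x := by
    intro m x hx hx1
    have : (1:ℝ) ≤ (2:ℝ)^m := one_le_pow₀ one_le_two
    nlinarith
  have hiter_lo : ∀ (m : ℕ) (x : ℝ), x₁ ≤ x → Klo^m * (A x : ℝ) ≤ (A ((2:ℝ)^m * x) : ℝ) := by
    intro m
    induction m with
    | zero => intro x hx; simp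
    | succ m ih =>
      intro x hx
      have hxpos : 0 < x := lt_of_lt_of_le one_pos (le_trans hx₁1 hx)
      have h1 := ih x hx
      have h2 := (hdb ((2:ℝ)^m * x) (h2mx m x hxpos hx)).1
      have heq : (2:ℝ)^(m+1) * x = 2 * ((2:ℝ)^m * x) := by ring
      rw [heq]
      calc Klo^(m+1) * (A x : ℝ) = Klo * (Klo^m * (A x : ℝ)) := by ring
        _ ≤ Klo * (A ((2:ℝ)^m * x) : ℝ) := by
            apply mul_le_mul_of_nonneg_left h1 (by linarith)
        _ ≤ (A (2 * ((2:ℝ)^m * x)) : ℝ) := h2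
  have hiter_hi : ∀ (m : ℕ) (x : ℝ), x₁ ≤ x → (A ((2:ℝ)^m * x) : ℝ) ≤ Khi^m * (A x : ℝ) := by
    intro m
    induction m with
    | zero => intro x hx; simp
    | succ m ih =>
      intro x hx
      have hxpos : 0 < x := lt_of_lt_of_le one_pos (le_trans hx₁1 hx)
      have h1 := ih x hx
      have h2 := (hdb ((2:ℝ)^m * x) (h2mx m x hxpos hx)).2
      have heq : (2:ℝ)^(m+1) * x = 2 * ((2:ℝ)^m * x) := by ring
      rw [heq]
      calc (A (2 * ((2:ℝ)^m * x)) : ℝ) ≤ Khi * (A ((2:ℝ)^m * x) : ℝ) := h2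
        _ ≤ Khi * (Khi^m * (A x : ℝ)) := by
            apply mul_le_mul_of_nonneg_left h1 hKhi0.le
        _ = Khi^(m+1) * (A x : ℝ) := by ring
  have hfind : ∀ y : ℝ, x₁ ≤ y → ∀ N : ℕ, ∃ m : ℕ, N ≤ A ((2:ℝ)^m * y) := by
    intro y hy N
    obtain ⟨m, hm⟩ := pow_unbounded_of_one_lt (N:ℝ) hKlo1
    refine ⟨m, ?_⟩
    have h1 := hiter_lo m y hy
    have hAy1 : (1:ℝ) ≤ (A y : ℝ) := by exact_mod_cast hApos y (le_trans hx₁p hy)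
    have h2 : (N:ℝ) ≤ (A ((2:ℝ)^m * y) : ℝ) := by
      nlinarith [pow_pos (lt_trans one_pos hKlo1) m]
    exact_mod_cast h2
  have hgeom34 : ∀ m : ℕ, ∑ j ∈ Finset.range m, (3/4:ℝ)^j ≤ 4 := by
    intro m
    have h := Summable.sum_le_tsum (Finset.range m) (fun i _ => by positivity)
      (summable_geometric_of_lt_one (by norm_num) (by norm_num : (3/4:ℝ) < 1))
    rw [tsum_geometric_of_lt_one (by norm_num) (by norm_num : (3/4:ℝ) < 1)] at h
    norm_num at h
    linarith
  have hBsum : ∀ y : ℝ, x₁ ≤ y → ∀ N : ℕ,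
      ∑ i ∈ Finset.Ico (A y) N, (y * p i)^2 ≤ 12 * (A y : ℝ) := by
    intro y hy N
    have hypos : 0 < y := lt_of_lt_of_le one_pos (le_trans hx₁1 hy)
    have hAy0 : (0:ℝ) ≤ (A y : ℝ) := Nat.cast_nonneg _
    obtain ⟨m, hm⟩ := hfind y hy N
    have hsub : ∑ i ∈ Finset.Ico (A y) N, (y * p i)^2
        ≤ ∑ i ∈ Finset.Ico (A y) (A ((2:ℝ)^m * y)), (y * p i)^2 := by
      apply Finset.sum_le_sum_of_subset_of_nonneg
      · exact Finset.Ico_subset_Ico le_rfl hm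
      · intro i _ _
        positivity
    have hmain : ∀ m : ℕ, ∑ i ∈ Finset.Ico (A y) (A ((2:ℝ)^m * y)), (y * p i)^2
        ≤ ∑ j ∈ Finset.range m, Khi^(j+1) * (A y : ℝ) * (1/4)^j := by
      intro m
      induction m with
      | zero => simp
      | succ m ih =>
        have hle1 : A y ≤ A ((2:ℝ)^m * y) := by
          apply hAmono _ _ hypos
          exact le_mul_of_one_le_left hypos.le (one_le_pow₀ one_le_two)
        have hle2 : A ((2:ℝ)^m * y) ≤ A ((2:ℝ)^(m+1) * y) := by
          apply hAmono _ _ (by positivity)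
          exact mul_le_mul_of_nonneg_right (pow_le_pow_right₀ one_le_two (Nat.le_succ m)) hypos.le
        rw [← Finset.sum_Ico_consecutive _ hle1 hle2, Finset.sum_range_succ]
        apply add_le_add ih
        have hblock : ∀ i ∈ Finset.Ico (A ((2:ℝ)^m * y)) (A ((2:ℝ)^(m+1) * y)),
            (y * p i)^2 ≤ (1/4:ℝ)^m := by
          intro i hi
          rw [Finset.mem_Ico] at hi
          have hpi := hAnot ((2:ℝ)^m * y) (by positivity) i hi.1
          have h1 : y * p i ≤ (1/2:ℝ)^m := by
            have h2 : (0:ℝ) < (2:ℝ)^m * y := by positivity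
            have h3 : y * p i < y * (1/((2:ℝ)^m * y)) :=
              mul_lt_mul_of_pos_left hpi hypos
            have h4 : y * (1/((2:ℝ)^m * y)) = (1/2:ℝ)^m := by
              field_simp
              rw [← mul_pow]; norm_num
            linarith
          have h5 : (0:ℝ) ≤ y * p i := mul_nonneg hypos.le (hp_pos i).le
          calc (y * p i)^2 ≤ ((1/2:ℝ)^m)^2 := pow_le_pow_left₀ h5 h1 2
            _ = (1/4:ℝ)^m := by
                rw [← pow_mul, mul_comm m 2, pow_mul]
                norm_num
        calc ∑ i ∈ Finset.Ico (A ((2:ℝ)^m * y)) (A ((2:ℝ)^(m+1) * y)), (y * p i)^2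
            ≤ (Finset.Ico (A ((2:ℝ)^m * y)) (A ((2:ℝ)^(m+1) * y))).card • ((1/4:ℝ)^m) :=
              Finset.sum_le_card_nsmul _ _ _ hblock
          _ = ((Finset.Ico (A ((2:ℝ)^m * y)) (A ((2:ℝ)^(m+1) * y))).card : ℝ) * (1/4:ℝ)^m := by
              rw [nsmul_eq_mul]
          _ ≤ (A ((2:ℝ)^(m+1) * y) : ℝ) * (1/4:ℝ)^m := by
              apply mul_le_mul_of_nonneg_right _ (by positivity)
              rw [Nat.card_Ico]
              exact_mod_cast Nat.sub_le _ _
          _ ≤ Khi^(m+1) * (A y : ℝ) * (1/4)^m := by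
              apply mul_le_mul_of_nonneg_right (hiter_hi (m+1) y hy) (by positivity)
    calc ∑ i ∈ Finset.Ico (A y) N, (y * p i)^2
        ≤ ∑ j ∈ Finset.range m, Khi^(j+1) * (A y : ℝ) * (1/4)^j := le_trans hsub (hmain m)
      _ ≤ ∑ j ∈ Finset.range m, 3 * (A y : ℝ) * (3/4)^j := by
          apply Finset.sum_le_sum
          intro j _
          have h1 : Khi^(j+1) ≤ (3:ℝ)^(j+1) := pow_le_pow_left₀ hKhi0.le hKhi3 (j+1)
          have h2 : (3:ℝ)^(j+1) * (1/4)^j = 3 * (3/4)^j := by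
            rw [pow_succ]
            rw [show ((3:ℝ)/4)^j = (3 * (1/4:ℝ))^j by norm_num, mul_pow]
            ring
          calc Khi^(j+1) * (A y : ℝ) * (1/4)^j ≤ (3:ℝ)^(j+1) * (A y : ℝ) * (1/4)^j := by
                apply mul_le_mul_of_nonneg_right _ (by positivity)
                exact mul_le_mul_of_nonneg_right h1 hAy0
            _ = 3 * (A y : ℝ) * (3/4)^j := by
                rw [show (3:ℝ)^(j+1) * (A y : ℝ) * (1/4)^j
                  = ((3:ℝ)^(j+1) * (1/4)^j) * (A y : ℝ) by ring, h2]
                ring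
      _ = 3 * (A y : ℝ) * ∑ j ∈ Finset.range m, (3/4:ℝ)^j := by
          rw [Finset.mul_sum]
      _ ≤ 3 * (A y : ℝ) * 4 := by
          apply mul_le_mul_of_nonneg_left (hgeom34 m) (by positivity)
      _ = 12 * (A y : ℝ) := by ring
  have hx₁pos : 0 < x₁ := lt_of_lt_of_le one_pos hx₁1
  have hKlopos : 0 < Klo := lt_trans one_pos hKlo1
  have hpowθ : ∀ k : ℕ, ((2:ℝ)^k) ^ (θ/2) = Kθ ^ k := by
    intro k
    rw [hKθ, ← Real.rpow_natCast (2:ℝ) k, ← Real.rpow_mul two_pos.le,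
      ← Real.rpow_natCast ((2:ℝ) ^ (θ/2)) k, ← Real.rpow_mul two_pos.le]
    congr 1
    ring
  have hgeomρ : ∀ m : ℕ, ∑ j ∈ Finset.range m, ρ^j ≤ (1-ρ)⁻¹ := by
    intro m
    have h := Summable.sum_le_tsum (Finset.range m) (fun i _ => by positivity)
      (summable_geometric_of_lt_one hρ0.le hρ1)
    rwa [tsum_geometric_of_lt_one hρ0.le hρ1] at h
  have hAsum : ∀ y : ℝ, x₁ ≤ y →
      ∑ i ∈ Finset.range (A y), (y * p i) ^ (θ/2)
        ≤ (Kθ * (1-ρ)⁻¹ + 2 * x₁ * (A x₁ : ℝ)) * (A y : ℝ) := by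
    intro y hy
    have hypos : 0 < y := lt_of_lt_of_le one_pos (le_trans hx₁1 hy)
    have hAy0 : (0:ℝ) ≤ (A y : ℝ) := Nat.cast_nonneg _
    have hAy1 : (1:ℝ) ≤ (A y : ℝ) := by exact_mod_cast hApos y (le_trans hx₁p hy)
    have hAx₁1 : (1:ℝ) ≤ (A x₁ : ℝ) := by exact_mod_cast hApos x₁ hx₁p
    have hex : ∃ j : ℕ, y < x₁ * 2^j := by
      obtain ⟨j, hj⟩ := pow_unbounded_of_one_lt (y / x₁) one_lt_two
      exact ⟨j, by rwa [div_lt_iff₀ hx₁pos, mul_comm] at hj⟩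
    set J := Nat.find hex with hJdef
    have hJ : y < x₁ * 2^J := Nat.find_spec hex
    have hJ' : ∀ j, j < J → x₁ * 2^j ≤ y := fun j hj => not_lt.1 (Nat.find_min hex hj)
    have hJ1 : 1 ≤ J := by
      by_contra h
      push_neg at h
      interval_cases J
      · simp only [pow_zero, mul_one] at hJ
        linarith
    have htel : ∀ m : ℕ, ∑ i ∈ Finset.range (A y), (y * p i) ^ (θ/2)
        = ∑ i ∈ Finset.range (A (y / 2^m)), (y * p i) ^ (θ/2)
          + ∑ j ∈ Finset.range m, ∑ i ∈ Finset.Ico (A (y / 2^(j+1))) (A (y / 2^j)),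
              (y * p i) ^ (θ/2) := by
      intro m
      induction m with
      | zero => simp
      | succ m ih =>
        rw [ih, Finset.sum_range_succ]
        have hm1 : A (y / 2^(m+1)) ≤ A (y / 2^m) := by
          apply hAmono _ _ (by positivity)
          apply div_le_div_of_nonneg_left hypos.le (by positivity)
          exact pow_le_pow_right₀ one_le_two (Nat.le_succ m)
        have hsplit : ∑ i ∈ Finset.range (A (y / 2^m)), (y * p i) ^ (θ/2)
            = ∑ i ∈ Finset.range (A (y / 2^(m+1))), (y * p i) ^ (θ/2)
              + ∑ i ∈ Finset.Ico (A (y / 2^(m+1))) (A (y / 2^m)), (y * p i) ^ (θ/2) := by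
          rw [Finset.range_eq_Ico, Finset.range_eq_Ico]
          exact (Finset.sum_Ico_consecutive _ (Nat.zero_le _) hm1).symm
        rw [hsplit]
        ring
    -- head bound
    have hKloJ : Klo ^ (J-1) ≤ (A y : ℝ) := by
      have h1 := hiter_lo (J-1) x₁ le_rfl
      have h2 : A ((2:ℝ)^(J-1) * x₁) ≤ A y := by
        apply hAmono _ _ (by positivity)
        have := hJ' (J-1) (by omega)
        linarith [this]
      have h3 : (A ((2:ℝ)^(J-1) * x₁) : ℝ) ≤ (A y : ℝ) := by exact_mod_cast h2
      nlinarith [pow_pos hKlopos (J-1)]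
    have hhead : ∑ i ∈ Finset.range (A (y / 2^J)), (y * p i) ^ (θ/2)
        ≤ 2 * x₁ * (A x₁ : ℝ) * (A y : ℝ) := by
      have hbnd : ∀ i ∈ Finset.range (A (y / 2^J)), (y * p i) ^ (θ/2) ≤ y ^ (θ/2) := by
        intro i _
        apply Real.rpow_le_rpow (mul_nonneg hypos.le (hp_pos i).le) _ (by linarith)
        have h1 : p i ≤ p 0 := hp_mono (Nat.zero_le i)
        nlinarith
      have hcard : A (y / 2^J) ≤ A x₁ := by
        apply hAmono _ _ (by positivity)
        rw [div_le_iff₀ (by positivity : (0:ℝ) < 2^J)]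
        linarith [hJ]
      have hyb : y ^ (θ/2) ≤ x₁ * 2 * Klo ^ (J-1) := by
        have h1 : y ^ (θ/2) ≤ (x₁ * 2^J) ^ (θ/2) :=
          Real.rpow_le_rpow hypos.le hJ.le (by linarith)
        have h2 : (x₁ * 2^J) ^ (θ/2) = x₁ ^ (θ/2) * ((2:ℝ)^J) ^ (θ/2) :=
          Real.mul_rpow hx₁pos.le (by positivity)
        have h3 : x₁ ^ (θ/2) ≤ x₁ := by
          calc x₁ ^ (θ/2) ≤ x₁ ^ (1:ℝ) :=
                Real.rpow_le_rpow_of_exponent_le hx₁1 (by linarith)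
            _ = x₁ := Real.rpow_one x₁
        have h4 : Kθ ^ J ≤ Klo ^ J := pow_le_pow_left₀ hKθ0.le hKθKlo J
        have h5 : Klo ^ J = Klo * Klo ^ (J-1) := by
          conv_lhs => rw [show J = (J-1)+1 by omega]
          rw [pow_succ]
          ring
        have h6 : (0:ℝ) < Klo ^ (J-1) := pow_pos hKlopos _
        calc y ^ (θ/2) ≤ x₁ ^ (θ/2) * ((2:ℝ)^J) ^ (θ/2) := by rw [← h2]; exact h1
          _ = x₁ ^ (θ/2) * Kθ ^ J := by rw [hpowθ J]
          _ ≤ x₁ * Klo ^ J := by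
              apply mul_le_mul h3 h4 (by positivity) hx₁pos.le
          _ = x₁ * Klo * Klo ^ (J-1) := by rw [h5]; ring
          _ ≤ x₁ * 2 * Klo ^ (J-1) :=
              mul_le_mul_of_nonneg_right
                (mul_le_mul_of_nonneg_left hKlo2 hx₁pos.le) h6.le
      calc ∑ i ∈ Finset.range (A (y / 2^J)), (y * p i) ^ (θ/2)
          ≤ (Finset.range (A (y / 2^J))).card • (y ^ (θ/2)) :=
            Finset.sum_le_card_nsmul _ _ _ hbnd
        _ = ((A (y / 2^J) : ℕ) : ℝ) * y ^ (θ/2) := by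
            rw [nsmul_eq_mul, Finset.card_range]
        _ ≤ (A x₁ : ℝ) * (x₁ * 2 * Klo ^ (J-1)) := by
            apply mul_le_mul _ hyb (Real.rpow_nonneg hypos.le _) (Nat.cast_nonneg _)
            exact_mod_cast hcard
        _ ≤ (A x₁ : ℝ) * (x₁ * 2 * (A y : ℝ)) := by
            apply mul_le_mul_of_nonneg_left _ (Nat.cast_nonneg _)
            apply mul_le_mul_of_nonneg_left hKloJ (by positivity)
        _ = 2 * x₁ * (A x₁ : ℝ) * (A y : ℝ) := by ring
    -- blocks bound
    have hblocks : ∑ j ∈ Finset.range J, ∑ i ∈ Finset.Ico (A (y / 2^(j+1))) (A (y / 2^j)),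
          (y * p i) ^ (θ/2)
        ≤ Kθ * (1-ρ)⁻¹ * (A y : ℝ) := by
      have hone : ∀ j ∈ Finset.range J,
          ∑ i ∈ Finset.Ico (A (y / 2^(j+1))) (A (y / 2^j)), (y * p i) ^ (θ/2)
            ≤ (A y : ℝ) * Kθ * ρ^j := by
        intro j hj
        rw [Finset.mem_range] at hj
        have hx₁j : x₁ ≤ y / 2^j := by
          rw [le_div_iff₀ (by positivity : (0:ℝ) < 2^j)]
          exact hJ' j hj
        have helt : ∀ i ∈ Finset.Ico (A (y / 2^(j+1))) (A (y / 2^j)),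
            (y * p i) ^ (θ/2) ≤ Kθ^(j+1) := by
          intro i hi
          rw [Finset.mem_Ico] at hi
          have hpi := hAnot (y / 2^(j+1)) (by positivity) i hi.1
          have h1 : y * p i ≤ (2:ℝ)^(j+1) := by
            have h2 : y * (1 / (y / 2^(j+1))) = (2:ℝ)^(j+1) := by
              field_simp
            nlinarith [hp_pos i]
          calc (y * p i) ^ (θ/2) ≤ ((2:ℝ)^(j+1)) ^ (θ/2) :=
                Real.rpow_le_rpow (mul_nonneg hypos.le (hp_pos i).le) h1 (by linarith)
            _ = Kθ^(j+1) := hpowθ (j+1)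
        have hcard : (A (y / 2^j) : ℝ) ≤ (A y : ℝ) / Klo^j := by
          have h1 := hiter_lo j (y / 2^j) hx₁j
          have h2 : (2:ℝ)^j * (y / 2^j) = y := by
            field_simp
          rw [h2] at h1
          rw [le_div_iff₀ (pow_pos hKlopos j)]
          linarith
        calc ∑ i ∈ Finset.Ico (A (y / 2^(j+1))) (A (y / 2^j)), (y * p i) ^ (θ/2)
            ≤ (Finset.Ico (A (y / 2^(j+1))) (A (y / 2^j))).card • (Kθ^(j+1)) :=
              Finset.sum_le_card_nsmul _ _ _ helt
          _ = ((Finset.Ico (A (y / 2^(j+1))) (A (y / 2^j))).card : ℝ) * Kθ^(j+1) := by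
              rw [nsmul_eq_mul]
          _ ≤ (A (y / 2^j) : ℝ) * Kθ^(j+1) := by
              apply mul_le_mul_of_nonneg_right _ (by positivity)
              rw [Nat.card_Ico]
              exact_mod_cast Nat.sub_le _ _
          _ ≤ ((A y : ℝ) / Klo^j) * Kθ^(j+1) := by
              apply mul_le_mul_of_nonneg_right hcard (by positivity)
          _ = (A y : ℝ) * Kθ * ρ^j := by
              rw [pow_succ, hKθeq, mul_pow]
              field_simp
      calc ∑ j ∈ Finset.range J, ∑ i ∈ Finset.Ico (A (y / 2^(j+1))) (A (y / 2^j)),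
            (y * p i) ^ (θ/2)
          ≤ ∑ j ∈ Finset.range J, (A y : ℝ) * Kθ * ρ^j := Finset.sum_le_sum hone
        _ = (A y : ℝ) * Kθ * ∑ j ∈ Finset.range J, ρ^j := by rw [Finset.mul_sum]
        _ ≤ (A y : ℝ) * Kθ * (1-ρ)⁻¹ := by
            apply mul_le_mul_of_nonneg_left (hgeomρ J) (by positivity)
        _ = Kθ * (1-ρ)⁻¹ * (A y : ℝ) := by ring
    calc ∑ i ∈ Finset.range (A y), (y * p i) ^ (θ/2)
        = ∑ i ∈ Finset.range (A (y / 2^J)), (y * p i) ^ (θ/2)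
          + ∑ j ∈ Finset.range J, ∑ i ∈ Finset.Ico (A (y / 2^(j+1))) (A (y / 2^j)),
              (y * p i) ^ (θ/2) := htel J
      _ ≤ 2 * x₁ * (A x₁ : ℝ) * (A y : ℝ) + Kθ * (1-ρ)⁻¹ * (A y : ℝ) :=
          add_le_add hhead hblocks
      _ = (Kθ * (1-ρ)⁻¹ + 2 * x₁ * (A x₁ : ℝ)) * (A y : ℝ) := by ring
  -- conclusion
  refine ⟨x₁, hx₁1, Kθ * (1-ρ)⁻¹ + 2 * x₁ * (A x₁ : ℝ) + 12, ?_, ?_⟩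
  · have h1 : (0:ℝ) ≤ Kθ * (1-ρ)⁻¹ := mul_nonneg hKθ0.le (inv_nonneg.2 (by linarith))
    have h2 : (0:ℝ) ≤ 2 * x₁ * (A x₁ : ℝ) := by positivity
    linarith
  · intro y hy N
    have hypos : 0 < y := lt_of_lt_of_le one_pos (le_trans hx₁1 hy)
    have hsplit : ∑ i ∈ Finset.range N,
          (if 1 ≤ y * p i then (y * p i) ^ (θ/2) else (y * p i) ^ 2)
        = ∑ i ∈ (Finset.range N).filter (fun i => 1 ≤ y * p i), (y * p i) ^ (θ/2)
          + ∑ i ∈ (Finset.range N).filter (fun i => ¬ 1 ≤ y * p i), (y * p i) ^ 2 := by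
      rw [Finset.sum_ite]
    have hf1 : (Finset.range N).filter (fun i => 1 ≤ y * p i) ⊆ Finset.range (A y) := by
      intro i hi
      simp only [Finset.mem_filter, Finset.mem_range] at hi ⊢
      apply (hAiff y hypos i).2
      rw [div_le_iff₀ hypos]
      linarith [hi.2]
    have hf2 : (Finset.range N).filter (fun i => ¬ 1 ≤ y * p i) ⊆ Finset.Ico (A y) N := by
      intro i hi
      simp only [Finset.mem_filter, Finset.mem_range] at hi
      rw [Finset.mem_Ico]
      refine ⟨?_, hi.1⟩
      by_contra h
      push_neg at h
      have h2 := (hAiff y hypos i).1 h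
      rw [div_le_iff₀ hypos] at h2
      exact hi.2 (by linarith)
    calc ∑ i ∈ Finset.range N, (if 1 ≤ y * p i then (y * p i) ^ (θ/2) else (y * p i) ^ 2)
        = ∑ i ∈ (Finset.range N).filter (fun i => 1 ≤ y * p i), (y * p i) ^ (θ/2)
          + ∑ i ∈ (Finset.range N).filter (fun i => ¬ 1 ≤ y * p i), (y * p i) ^ 2 := hsplit
      _ ≤ ∑ i ∈ Finset.range (A y), (y * p i) ^ (θ/2)
          + ∑ i ∈ Finset.Ico (A y) N, (y * p i) ^ 2 := by
          apply add_le_add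
          · apply Finset.sum_le_sum_of_subset_of_nonneg hf1
            intro i _ _
            exact Real.rpow_nonneg (mul_nonneg hypos.le (hp_pos i).le) _
          · apply Finset.sum_le_sum_of_subset_of_nonneg hf2
            intro i _ _
            positivity
      _ ≤ (Kθ * (1-ρ)⁻¹ + 2 * x₁ * (A x₁ : ℝ)) * (A y : ℝ) + 12 * (A y : ℝ) :=
          add_le_add (hAsum y hy) (hBsum y hy N)
      _ = (Kθ * (1-ρ)⁻¹ + 2 * x₁ * (A x₁ : ℝ) + 12) * (A y : ℝ) := by ring

/-- Lemma 2.3: variance bound for the increment of the Poissonized scaled missing mass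
process. There exist `n₀ ≥ 1` and `C > 0` such that for all `0 ≤ t₁ ≤ t₂ ≤ 1` with
`δ = t₂ − t₁` and `n ≥ n₀`, if `X_i ~ Poisson(n t₁ p_i)` and `Y_i ~ Poisson(n δ p_i)` are
all mutually independent, then
`D = ∑_i (n t₂ p_i 1{X_i + Y_i = 0} − n t₁ p_i 1{X_i = 0})` converges absolutely a.s.,
is square-integrable, and `Var(D) ≤ C α(n) δ^{θ/2}`. -/
theorem missing_mass_increment_variance_bound
    (p : ℕ → ℝ) (hp_pos : ∀ i, 0 < p i) (hp_mono : Antitone p)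
    (hp_sum : ∑' i, p i = 1)
    (θ : ℝ) (hθ : θ ∈ Set.Ioc (0 : ℝ) 1)
    (L : ℝ → ℝ)
    (hL : ∀ c > (0 : ℝ), Tendsto (fun x => L (c * x) / L x) atTop (𝓝 1))
    (hα : ∀ x > (0 : ℝ), ((Set.ncard {i : ℕ | p i ≥ 1 / x} : ℝ)) = x ^ θ * L x) :
    ∃ n₀ : ℕ, 1 ≤ n₀ ∧ ∃ C > (0 : ℝ),
      ∀ t₁ t₂ : ℝ, 0 ≤ t₁ → t₁ ≤ t₂ → t₂ ≤ 1 → ∀ n : ℕ, n₀ ≤ n →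
      ∀ (Ω : Type) (_ : MeasurableSpace Ω) (P : Measure Ω), IsProbabilityMeasure P →
      ∀ X Y : ℕ → Ω → ℕ, (∀ i, Measurable (X i)) → (∀ i, Measurable (Y i)) →
      iIndepFun (Sum.elim X Y) P →
      (∀ i, ∀ k : ℕ, (P {ω | X i ω = k}).toReal =
        Real.exp (-((n : ℝ) * t₁ * p i)) * ((n : ℝ) * t₁ * p i) ^ k / k.factorial) →
      (∀ i, ∀ k : ℕ, (P {ω | Y i ω = k}).toReal =
        Real.exp (-((n : ℝ) * (t₂ - t₁) * p i)) *
          ((n : ℝ) * (t₂ - t₁) * p i) ^ k / k.factorial) →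
      ∀ D : Ω → ℝ,
      (∀ ω, D ω = ∑' i, ((n : ℝ) * t₂ * p i * (if X i ω + Y i ω = 0 then 1 else 0)
          - (n : ℝ) * t₁ * p i * (if X i ω = 0 then 1 else 0))) →
      ((∀ᵐ ω ∂P, Summable fun i =>
          |(n : ℝ) * t₂ * p i * (if X i ω + Y i ω = 0 then 1 else 0)
            - (n : ℝ) * t₁ * p i * (if X i ω = 0 then 1 else 0)|) ∧
        MemLp D 2 P ∧
        variance D P ≤ C * ((Set.ncard {i : ℕ | p i ≥ 1 / (n : ℝ)} : ℝ))
          * (t₂ - t₁) ^ (θ / 2)) := by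
  classical
  obtain ⟨hθ0, hθ1⟩ := hθ
  obtain ⟨x₁, hx₁1, C₀, hC₀pos, hcore⟩ := aux_core p hp_pos hp_mono hp_sum θ hθ0 hθ1 L hL hα
  refine ⟨max 1 ⌈x₁⌉₊, le_max_left _ _, 2*C₀ + 1, by positivity, ?_⟩
  intro t₁ t₂ ht₁0 ht₁₂ ht₂1 n hn Ω mΩ P hP X Y hXm hYm hindep hXd hYd D hD
  have hsum : Summable p := aux_summable hp_sum
  have ht₂0 : 0 ≤ t₂ := le_trans ht₁0 ht₁₂
  have hδ0 : 0 ≤ t₂ - t₁ := by linarith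
  have hnx₁ : x₁ ≤ (n : ℝ) := by
    have h1 : ⌈x₁⌉₊ ≤ n := le_trans (le_max_right _ _) hn
    calc x₁ ≤ (⌈x₁⌉₊ : ℝ) := Nat.le_ceil x₁
      _ ≤ (n : ℝ) := by exact_mod_cast h1
  have hn0 : (0:ℝ) ≤ n := Nat.cast_nonneg n
  -- the summands
  set f : ℕ → Ω → ℝ := fun i ω =>
    (n : ℝ) * t₂ * p i * (if X i ω + Y i ω = 0 then 1 else 0)
      - (n : ℝ) * t₁ * p i * (if X i ω = 0 then 1 else 0) with hfdef
  have hlam_nonneg : ∀ i, 0 ≤ (n:ℝ) * t₂ * p i :=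
    fun i => mul_nonneg (mul_nonneg hn0 ht₂0) (hp_pos i).le
  have ha_nonneg : ∀ i, 0 ≤ (n:ℝ) * t₁ * p i :=
    fun i => mul_nonneg (mul_nonneg hn0 ht₁0) (hp_pos i).le
  have hlam_le : ∀ i, (n:ℝ) * t₂ * p i ≤ (n:ℝ) * p i := by
    intro i
    nlinarith [mul_nonneg (mul_nonneg hn0 (sub_nonneg.2 ht₂1)) (hp_pos i).le]
  have ha_le : ∀ i, (n:ℝ) * t₁ * p i ≤ (n:ℝ) * p i := by
    intro i
    have ht₁1 : t₁ ≤ 1 := le_trans ht₁₂ ht₂1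
    nlinarith [mul_nonneg (mul_nonneg hn0 (sub_nonneg.2 ht₁1)) (hp_pos i).le]
  have hbnd : ∀ i ω, |f i ω| ≤ 2 * ((n:ℝ) * p i) := by
    intro i ω
    rw [hfdef]
    have h1 := hlam_nonneg i
    have h2 := ha_nonneg i
    have h3 := hlam_le i
    have h4 := ha_le i
    have h5 : 0 ≤ (n:ℝ) * p i := mul_nonneg hn0 (hp_pos i).le
    dsimp only
    split_ifs <;> rw [abs_le] <;> constructor <;> nlinarith
  have hsum2n : Summable (fun i => 2 * ((n:ℝ) * p i)) := by
    apply Summable.mul_left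
    exact hsum.mul_left _
  have habs : ∀ ω, Summable (fun i => |f i ω|) := by
    intro ω
    exact Summable.of_nonneg_of_le (fun i => abs_nonneg _) (fun i => hbnd i ω) hsum2n
  have hfsummable : ∀ ω, Summable (fun i => f i ω) := fun ω => (habs ω).of_abs
  have hfim : ∀ i, Measurable (f i) := by
    intro i
    have h1 : Measurable (fun ω => if X i ω + Y i ω = 0 then (1:ℝ) else 0) := by
      have he : (fun ω => if X i ω + Y i ω = 0 then (1:ℝ) else 0)
          = (fun k : ℕ => if k = 0 then (1:ℝ) else 0) ∘ (fun ω => X i ω + Y i ω) := rfl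
      rw [he]
      exact (measurable_of_countable _).comp ((hXm i).add (hYm i))
    have h2 : Measurable (fun ω => if X i ω = 0 then (1:ℝ) else 0) := by
      have he : (fun ω => if X i ω = 0 then (1:ℝ) else 0)
          = (fun k : ℕ => if k = 0 then (1:ℝ) else 0) ∘ (X i) := rfl
      rw [he]
      exact (measurable_of_countable _).comp (hXm i)
    exact (h1.const_mul _).sub (h2.const_mul _)
  -- measurable sets
  have hAm : ∀ i, MeasurableSet {ω | X i ω = 0} := by
    intro i
    exact (hXm i) (measurableSet_singleton 0)
  have hBm : ∀ i, MeasurableSet {ω | Y i ω = 0} := by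
    intro i
    exact (hYm i) (measurableSet_singleton 0)
  have hABm : ∀ i, MeasurableSet ({ω | X i ω = 0} ∩ {ω | Y i ω = 0}) :=
    fun i => (hAm i).inter (hBm i)
  -- probabilities
  have hPA : ∀ i, (P {ω | X i ω = 0}).toReal = Real.exp (-((n:ℝ) * t₁ * p i)) := by
    intro i
    have h := hXd i 0
    simpa using h
  have hPB : ∀ i, (P {ω | Y i ω = 0}).toReal = Real.exp (-((n:ℝ) * (t₂ - t₁) * p i)) := by
    intro i
    have h := hYd i 0
    simpa using h
  have hPAB : ∀ i, (P ({ω | X i ω = 0} ∩ {ω | Y i ω = 0})).toReal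
      = Real.exp (-((n:ℝ) * t₁ * p i)) * Real.exp (-((n:ℝ) * (t₂ - t₁) * p i)) := by
    intro i
    have hind : IndepFun (X i) (Y i) P :=
      hindep.indepFun (show (Sum.inl i : ℕ ⊕ ℕ) ≠ Sum.inr i by simp)
    have h := hind.measure_inter_preimage_eq_mul {0} {0}
      (measurableSet_singleton 0) (measurableSet_singleton 0)
    have heq : {ω | X i ω = 0} ∩ {ω | Y i ω = 0} = X i ⁻¹' {0} ∩ Y i ⁻¹' {0} := rfl
    rw [heq, h, ENNReal.toReal_mul]
    have h1 : X i ⁻¹' {0} = {ω | X i ω = 0} := rfl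
    have h2 : Y i ⁻¹' {0} = {ω | Y i ω = 0} := rfl
    rw [h1, h2, hPA, hPB]
  -- indicator forms
  have hind1 : ∀ i, (fun ω => if X i ω + Y i ω = 0 then (1:ℝ) else 0)
      = ({ω | X i ω = 0} ∩ {ω | Y i ω = 0}).indicator (fun _ => (1:ℝ)) := by
    intro i
    funext ω
    by_cases h : X i ω + Y i ω = 0
    · rw [if_pos h, Set.indicator_of_mem]
      exact ⟨show X i ω = 0 by omega, show Y i ω = 0 by omega⟩
    · rw [if_neg h, Set.indicator_of_notMem]
      intro hmem
      simp only [Set.mem_inter_iff, Set.mem_setOf_eq] at hmem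
      omega
  have hind2 : ∀ i, (fun ω => if X i ω = 0 then (1:ℝ) else 0)
      = ({ω | X i ω = 0}).indicator (fun _ => (1:ℝ)) := by
    intro i
    funext ω
    by_cases h : X i ω = 0
    · rw [if_pos h, Set.indicator_of_mem]
      exact h
    · rw [if_neg h, Set.indicator_of_notMem]
      exact h
  have hint_ind : ∀ (S : Set Ω), MeasurableSet S →
      ∫ ω, (S.indicator (fun _ => (1:ℝ))) ω ∂P = (P S).toReal := by
    intro S hS
    rw [MeasureTheory.integral_indicator_const (1:ℝ) hS]
    simp [measureReal_def]
  have hii1 : ∀ i, Integrable (({ω | X i ω = 0} ∩ {ω | Y i ω = 0}).indicator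
      (fun _ => (1:ℝ))) P := fun i => (integrable_const (1:ℝ)).indicator (hABm i)
  have hii2 : ∀ i, Integrable (({ω | X i ω = 0}).indicator (fun _ => (1:ℝ))) P :=
    fun i => (integrable_const (1:ℝ)).indicator (hAm i)
  have hf_eq : ∀ i, f i = fun ω =>
      ((n:ℝ) * t₂ * p i) * (({ω | X i ω = 0} ∩ {ω | Y i ω = 0}).indicator
          (fun _ => (1:ℝ))) ω
        - ((n:ℝ) * t₁ * p i) * (({ω | X i ω = 0}).indicator (fun _ => (1:ℝ))) ω := by
    intro i
    funext ω
    rw [hfdef]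
    dsimp only
    rw [show (if X i ω + Y i ω = 0 then (1:ℝ) else 0)
      = (fun ω => if X i ω + Y i ω = 0 then (1:ℝ) else 0) ω from rfl, hind1 i]
    rw [show (if X i ω = 0 then (1:ℝ) else 0)
      = (fun ω => if X i ω = 0 then (1:ℝ) else 0) ω from rfl, hind2 i]
  have hIntf : ∀ i, Integrable (f i) P := by
    intro i
    rw [hf_eq i]
    exact ((hii1 i).const_mul _).sub ((hii2 i).const_mul _)
  -- mean value
  have hμval : ∀ i, ∫ ω, f i ω ∂P
      = ((n:ℝ) * t₂ * p i) * ((P ({ω | X i ω = 0} ∩ {ω | Y i ω = 0})).toReal)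
        - ((n:ℝ) * t₁ * p i) * (P {ω | X i ω = 0}).toReal := by
    intro i
    rw [hf_eq i]
    rw [integral_sub ((hii1 i).const_mul _) ((hii2 i).const_mul _)]
    rw [integral_const_mul, integral_const_mul, hint_ind _ (hABm i), hint_ind _ (hAm i)]
  -- second moment
  have hsq : ∀ i, ∫ ω, (f i ω)^2 ∂P
      = (((n:ℝ) * t₂ * p i)^2 - 2 * ((n:ℝ) * t₁ * p i) * ((n:ℝ) * t₂ * p i))
          * ((P ({ω | X i ω = 0} ∩ {ω | Y i ω = 0})).toReal)
        + ((n:ℝ) * t₁ * p i)^2 * (P {ω | X i ω = 0}).toReal := by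
    intro i
    have hsq_eq : (fun ω => (f i ω)^2) = fun ω =>
        (((n:ℝ) * t₂ * p i)^2 - 2 * ((n:ℝ) * t₁ * p i) * ((n:ℝ) * t₂ * p i))
            * (({ω | X i ω = 0} ∩ {ω | Y i ω = 0}).indicator (fun _ => (1:ℝ))) ω
          + ((n:ℝ) * t₁ * p i)^2 * (({ω | X i ω = 0}).indicator (fun _ => (1:ℝ))) ω := by
      funext ω
      rw [hfdef]
      dsimp only
      rw [show (({ω | X i ω = 0} ∩ {ω | Y i ω = 0}).indicator (fun _ => (1:ℝ))) ω
        = (if X i ω + Y i ω = 0 then (1:ℝ) else 0) from (congrFun (hind1 i) ω).symm]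
      rw [show (({ω | X i ω = 0}).indicator (fun _ => (1:ℝ))) ω
        = (if X i ω = 0 then (1:ℝ) else 0) from (congrFun (hind2 i) ω).symm]
      by_cases h1 : X i ω + Y i ω = 0
      · have h2 : X i ω = 0 := by omega
        rw [if_pos h1, if_pos h2]
        ring
      · by_cases h2 : X i ω = 0
        · rw [if_neg h1, if_pos h2]
          ring
        · rw [if_neg h1, if_neg h2]
          ring
    rw [hsq_eq]
    rw [integral_add ((hii1 i).const_mul _) ((hii2 i).const_mul _)]
    rw [integral_const_mul, integral_const_mul, hint_ind _ (hABm i), hint_ind _ (hAm i)]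
  -- MemLp of f i
  have hMem2 : ∀ i, MemLp (f i) 2 P := by
    intro i
    apply MemLp.of_bound (hfim i).aestronglyMeasurable (2 * ((n:ℝ) * p i))
    apply ae_of_all
    intro ω
    rw [Real.norm_eq_abs]
    exact hbnd i ω
  -- centered variables
  set μv : ℕ → ℝ := fun i => ∫ ω, f i ω ∂P with hμvdef
  set Z : ℕ → Ω → ℝ := fun i ω => f i ω - μv i with hZdef
  have hZmeas : ∀ i, Measurable (Z i) := fun i => (hfim i).sub measurable_const
  have hZmem : ∀ i, MemLp (Z i) 2 P := fun i => (hMem2 i).sub (memLp_const _)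
  have hZint : ∀ i, Integrable (Z i) P := fun i => (hIntf i).sub (integrable_const _)
  have hZ0 : ∀ i, ∫ ω, Z i ω ∂P = 0 := by
    intro i
    rw [hZdef]
    dsimp only
    rw [integral_sub (hIntf i) (integrable_const _), integral_const]
    simp [hμvdef]
  have hZbnd : ∀ i ω, |Z i ω| ≤ 4 * ((n:ℝ) * p i) := by
    intro i ω
    have h1 : |μv i| ≤ 2 * ((n:ℝ) * p i) := by
      rw [hμvdef]
      dsimp only
      have h2 := norm_integral_le_of_norm_le_const (μ := P) (f := f i)
        (C := 2 * ((n:ℝ) * p i))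
        (ae_of_all _ (fun ω => by rw [Real.norm_eq_abs]; exact hbnd i ω))
      rw [Real.norm_eq_abs] at h2
      simpa using h2
    calc |Z i ω| ≤ |f i ω| + |μv i| := abs_sub (f i ω) (μv i)
      _ ≤ 2 * ((n:ℝ) * p i) + 2 * ((n:ℝ) * p i) := add_le_add (hbnd i ω) h1
      _ = 4 * ((n:ℝ) * p i) := by ring
  -- variance of Z i bounded by second moment of f i
  have hZvar : ∀ i, variance (Z i) P ≤ ∫ ω, (f i ω)^2 ∂P := by
    intro i
    have hv := variance_eq_sub (hZmem i)
    simp only [Pi.pow_apply] at hv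
    have hz0 : ∫ ω, Z i ω ∂P = 0 := hZ0 i
    rw [hv, hz0]
    have hexp : (fun ω => (Z i ω)^2)
        = fun ω => (f i ω)^2 - (2 * μv i) * (f i ω) + (μv i)^2 := by
      funext ω
      rw [hZdef]
      dsimp only
      ring
    have hintsq : Integrable (fun ω => (f i ω)^2) P := (hMem2 i).integrable_sq
    have hint2 : Integrable (fun ω => (2 * μv i) * (f i ω)) P := (hIntf i).const_mul _
    have hint1 : Integrable (fun ω => (f i ω)^2 - (2 * μv i) * (f i ω)) P := by
      exact hintsq.sub hint2
    have h3 : ∫ ω, (Z i ω)^2 ∂P = ∫ ω, (f i ω)^2 ∂P - (2 * μv i) * μv i + (μv i)^2 := by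
      rw [hexp]
      rw [integral_add hint1 (integrable_const _)]
      rw [integral_sub hintsq hint2, integral_const_mul, integral_const]
      simp [hμvdef]
    rw [h3]
    nlinarith [sq_nonneg (μv i)]
  -- pairwise independence of Z
  have hSumMeas : ∀ s : ℕ ⊕ ℕ, Measurable (Sum.elim X Y s) := by
    rintro (k | k)
    · exact hXm k
    · exact hYm k
  have hpairZ : ∀ i j, i ≠ j → IndepFun (Z i) (Z j) P := by
    intro i j hij
    have hpairXY : IndepFun (fun ω => (X i ω, Y i ω)) (fun ω => (X j ω, Y j ω)) P := by
      have h := hindep.indepFun_prodMk_prodMk hSumMeas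
        (Sum.inl i) (Sum.inr i) (Sum.inl j) (Sum.inr j)
        (by simp [hij]) (by simp) (by simp) (by simp [hij])
      exact h
    have hcomp := hpairXY.comp
      (show Measurable (fun q : ℕ × ℕ =>
        (n:ℝ) * t₂ * p i * (if q.1 + q.2 = 0 then (1:ℝ) else 0)
          - (n:ℝ) * t₁ * p i * (if q.1 = 0 then (1:ℝ) else 0) - μv i)
        from measurable_of_countable _)
      (show Measurable (fun q : ℕ × ℕ =>
        (n:ℝ) * t₂ * p j * (if q.1 + q.2 = 0 then (1:ℝ) else 0)
          - (n:ℝ) * t₁ * p j * (if q.1 = 0 then (1:ℝ) else 0) - μv j)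
        from measurable_of_countable _)
    exact hcomp
  -- partial sums
  have hSmem : ∀ N, MemLp (fun ω => ∑ i ∈ Finset.range N, Z i ω) 2 P :=
    fun N => memLp_finset_sum (Finset.range N) (fun i _ => hZmem i)
  have hSmean : ∀ N, ∫ ω, (∑ i ∈ Finset.range N, Z i ω) ∂P = 0 := by
    intro N
    rw [integral_finset_sum _ (fun i _ => hZint i)]
    exact Finset.sum_eq_zero (fun i _ => hZ0 i)
  have hSvar : ∀ N, ∫ ω, (∑ i ∈ Finset.range N, Z i ω)^2 ∂P
      ≤ ∑ i ∈ Finset.range N, ∫ ω, (f i ω)^2 ∂P := by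
    intro N
    have hfun : (∑ i ∈ Finset.range N, Z i) = fun ω => ∑ i ∈ Finset.range N, Z i ω := by
      funext ω
      simp
    have hvs := IndepFun.variance_sum (μ := P) (X := Z) (s := Finset.range N)
      (fun i _ => hZmem i) (fun i _ j _ hij => hpairZ i j hij)
    rw [hfun] at hvs
    have hv2 := variance_eq_sub (hSmem N)
    simp only [Pi.pow_apply] at hv2
    rw [hvs, hSmean N] at hv2
    have hsum_le : ∑ i ∈ Finset.range N, variance (Z i) P
        ≤ ∑ i ∈ Finset.range N, ∫ ω, (f i ω)^2 ∂P :=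
      Finset.sum_le_sum (fun i _ => hZvar i)
    have h02 : (0:ℝ)^2 = 0 := by norm_num
    rw [h02] at hv2
    linarith [hv2, hsum_le]
  -- D measurable and bounded
  have hDeq : D = fun ω => ∑' i, f i ω := by
    funext ω
    exact hD ω
  have hDmeas : Measurable D := by
    rw [hDeq]
    apply measurable_of_tendsto_metrizable' atTop
      (fun N => Finset.measurable_sum (Finset.range N) (fun i _ => hfim i))
    rw [tendsto_pi_nhds]
    intro ω
    exact (hfsummable ω).hasSum.tendsto_sum_nat
  have htsum2n : ∑' i, 2 * ((n:ℝ) * p i) = 2 * (n:ℝ) := by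
    rw [tsum_mul_left, tsum_mul_left, hp_sum]
    ring
  have hDbnd : ∀ ω, |D ω| ≤ 2 * (n:ℝ) := by
    intro ω
    rw [hDeq]
    dsimp only
    have h1 : ‖∑' i, f i ω‖ ≤ ∑' i, ‖f i ω‖ := by
      apply norm_tsum_le_tsum_norm
      simpa only [Real.norm_eq_abs] using habs ω
    simp only [Real.norm_eq_abs] at h1
    calc |∑' i, f i ω| ≤ ∑' i, |f i ω| := h1
      _ ≤ ∑' i, 2 * ((n:ℝ) * p i) := Summable.tsum_le_tsum (fun i => hbnd i ω) (habs ω) hsum2n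
      _ = 2 * (n:ℝ) := htsum2n
  have hDMem : MemLp D 2 P :=
    MemLp.of_bound hDmeas.aestronglyMeasurable (2*(n:ℝ))
      (ae_of_all _ (fun ω => by rw [Real.norm_eq_abs]; exact hDbnd ω))
  have hDint : Integrable D P := hDMem.integrable one_le_two
  have hDsq_int : Integrable (fun ω => (D ω)^2) P := hDMem.integrable_sq
  -- summability of means
  have hμbnd : ∀ i, |μv i| ≤ 2 * ((n:ℝ) * p i) := by
    intro i
    rw [hμvdef]
    dsimp only
    have h2 := norm_integral_le_of_norm_le_const (μ := P) (f := f i)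
      (C := 2 * ((n:ℝ) * p i))
      (ae_of_all _ (fun ω => by rw [Real.norm_eq_abs]; exact hbnd i ω))
    rw [Real.norm_eq_abs] at h2
    simpa using h2
  have hμsummable : Summable μv := by
    apply Summable.of_abs
    exact Summable.of_nonneg_of_le (fun i => abs_nonneg _) hμbnd hsum2n
  set c : ℝ := ∑' i, μv i with hcdef
  have htendS : ∀ ω, Tendsto (fun N => ∑ i ∈ Finset.range N, Z i ω) atTop
      (𝓝 (D ω - c)) := by
    intro ω
    have h1 : HasSum (fun i => f i ω - μv i) ((∑' i, f i ω) - c) :=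
      (hfsummable ω).hasSum.sub hμsummable.hasSum
    have h2 := h1.tendsto_sum_nat
    have h3 : D ω = ∑' i, f i ω := hD ω
    rw [h3]
    exact h2
  -- dominated convergence
  have hDCT : Tendsto (fun N => ∫ ω, (∑ i ∈ Finset.range N, Z i ω)^2 ∂P) atTop
      (𝓝 (∫ ω, (D ω - c)^2 ∂P)) := by
    apply tendsto_integral_of_dominated_convergence (bound := fun _ => (4*(n:ℝ))^2)
    · intro N
      exact ((Finset.measurable_sum (Finset.range N)
        (fun i _ => hZmeas i)).pow_const 2).aestronglyMeasurable
    · exact integrable_const _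
    · intro N
      apply ae_of_all
      intro ω
      have h1 : |∑ i ∈ Finset.range N, Z i ω| ≤ 4*(n:ℝ) := by
        calc |∑ i ∈ Finset.range N, Z i ω| ≤ ∑ i ∈ Finset.range N, |Z i ω| :=
              Finset.abs_sum_le_sum_abs _ _
          _ ≤ ∑ i ∈ Finset.range N, 4 * ((n:ℝ) * p i) :=
              Finset.sum_le_sum (fun i _ => hZbnd i ω)
          _ ≤ ∑' i, 4 * ((n:ℝ) * p i) := by
              apply Summable.sum_le_tsum
              · intro i _
                have := hp_pos i
                positivity
              · exact hsum2n.mul_left 2 |>.congr (fun i => by ring)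
          _ = 4 * (n:ℝ) := by
              rw [tsum_mul_left, tsum_mul_left, hp_sum]
              ring
      have h2 : ‖(∑ i ∈ Finset.range N, Z i ω)^2‖
          = |∑ i ∈ Finset.range N, Z i ω|^2 := by
        rw [norm_pow, Real.norm_eq_abs]
      rw [h2]
      have h4 : (0:ℝ) ≤ 4*(n:ℝ) := by positivity
      calc |∑ i ∈ Finset.range N, Z i ω|^2 ≤ (4*(n:ℝ))^2 :=
            pow_le_pow_left₀ (abs_nonneg _) h1 2
        _ = (4*(n:ℝ))^2 := rfl
    · apply ae_of_all
      intro ω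
      exact (htendS ω).pow 2
  -- per-index bound from keyineq
  have hVbound : ∀ i, ∫ ω, (f i ω)^2 ∂P
      ≤ 2 * (t₂ - t₁) ^ (θ/2)
        * (if 1 ≤ (n:ℝ) * p i then ((n:ℝ) * p i) ^ (θ/2) else ((n:ℝ) * p i)^2) := by
    intro i
    have hk := aux_keyineq θ ((n:ℝ) * p i) t₁ (t₂ - t₁) hθ0 hθ1
      (mul_nonneg hn0 (hp_pos i).le) ht₁0 hδ0 (by linarith)
    have he1 : t₁ * ((n:ℝ) * p i) = (n:ℝ) * t₁ * p i := by ring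
    have he2 : (t₂ - t₁) * ((n:ℝ) * p i) = (n:ℝ) * (t₂ - t₁) * p i := by ring
    rw [he1, he2] at hk
    have he3 : (n:ℝ) * t₁ * p i + (n:ℝ) * (t₂ - t₁) * p i = (n:ℝ) * t₂ * p i := by ring
    rw [he3] at hk
    rw [hsq i, hPA i, hPAB i]
    linarith [hk]
  -- final bound
  have hAn0 : (0:ℝ) ≤ (Set.ncard {i : ℕ | p i ≥ 1 / (n:ℝ)} : ℝ) := Nat.cast_nonneg _
  have hδθ : 0 ≤ (t₂ - t₁) ^ (θ/2) := Real.rpow_nonneg hδ0 _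
  have hfinalN : ∀ N, ∫ ω, (∑ i ∈ Finset.range N, Z i ω)^2 ∂P
      ≤ 2 * (t₂ - t₁)^(θ/2) * (C₀ * (Set.ncard {i : ℕ | p i ≥ 1 / (n:ℝ)} : ℝ)) := by
    intro N
    calc ∫ ω, (∑ i ∈ Finset.range N, Z i ω)^2 ∂P
        ≤ ∑ i ∈ Finset.range N, ∫ ω, (f i ω)^2 ∂P := hSvar N
      _ ≤ ∑ i ∈ Finset.range N, 2 * (t₂ - t₁)^(θ/2)
            * (if 1 ≤ (n:ℝ) * p i then ((n:ℝ) * p i) ^ (θ/2) else ((n:ℝ) * p i)^2) :=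
          Finset.sum_le_sum (fun i _ => hVbound i)
      _ = 2 * (t₂ - t₁)^(θ/2) * ∑ i ∈ Finset.range N,
            (if 1 ≤ (n:ℝ) * p i then ((n:ℝ) * p i) ^ (θ/2) else ((n:ℝ) * p i)^2) := by
          rw [← Finset.mul_sum]
      _ ≤ 2 * (t₂ - t₁)^(θ/2) * (C₀ * (Set.ncard {i : ℕ | p i ≥ 1 / (n:ℝ)} : ℝ)) := by
          apply mul_le_mul_of_nonneg_left (hcore (n:ℝ) hnx₁ N)
          exact mul_nonneg (by norm_num) hδθ
  have hintc : ∫ ω, (D ω - c)^2 ∂P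
      ≤ 2 * (t₂ - t₁)^(θ/2) * (C₀ * (Set.ncard {i : ℕ | p i ≥ 1 / (n:ℝ)} : ℝ)) :=
    le_of_tendsto hDCT (Filter.Eventually.of_forall hfinalN)
  have hvarD := variance_eq_sub hDMem
  simp only [Pi.pow_apply] at hvarD
  have hexpand : ∫ ω, (D ω - c)^2 ∂P
      = ∫ ω, (D ω)^2 ∂P - (2*c) * (∫ ω, D ω ∂P) + c^2 := by
    have he : (fun ω => (D ω - c)^2) = fun ω => (D ω)^2 - (2*c) * (D ω) + c^2 := by
      funext ω
      ring
    rw [he]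
    have hint2 : Integrable (fun ω => (2*c) * D ω) P := hDint.const_mul _
    have hint1 : Integrable (fun ω => (D ω)^2 - (2*c) * D ω) P := hDsq_int.sub hint2
    rw [integral_add hint1 (integrable_const _), integral_sub hDsq_int hint2,
      integral_const_mul, integral_const]
    simp
  have hvar_le : variance D P ≤ ∫ ω, (D ω - c)^2 ∂P := by
    rw [hvarD, hexpand]
    nlinarith [sq_nonneg ((∫ ω, D ω ∂P) - c)]
  refine ⟨?_, hDMem, ?_⟩
  · apply ae_of_all
    intro ω
    exact habs ω
  · calc variance D P
        ≤ 2 * (t₂ - t₁)^(θ/2) * (C₀ * (Set.ncard {i : ℕ | p i ≥ 1 / (n:ℝ)} : ℝ)) :=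
          le_trans hvar_le hintc
      _ ≤ (2*C₀ + 1) * (Set.ncard {i : ℕ | p i ≥ 1 / (n:ℝ)} : ℝ) * (t₂ - t₁)^(θ/2) := by
          nlinarith [mul_nonneg hAn0 hδθ]
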